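/- For the rooted binary trees T_a = (((((2,3),4),5),6),1) and T_b = ((((2,6),(3,4)),5),1) on taxon set {1,…,6}, every character f attaining d_MP(T_a,T_b) uses at least 3 states; in particular the bound ⌊n/2⌋ on the number of states needed by an optimal convex character is tight for n = 6. -/

import Mathlib

namespace MPDist

/-- A rooted binary phylogenetic tree: leaves are labelled by taxa,
every internal vertex (including the root) has exactly two children. -/
inductive PTree (X : Type) : Type
  | leaf : X → PTree X
  | node : PTree X → PTree X → PTree X

namespace PTree

/-- The list of leaf labels (taxa) of a tree. -/
def leaves {X : Type} : PTree X → List X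
  | .leaf x => [x]
  | .node l r => l.leaves ++ r.leaves

/-- Relabelling of taxa. -/
def map {X Y : Type} (φ : X → Y) : PTree X → PTree Y
  | .leaf x => .leaf (φ x)
  | .node l r => .node (l.map φ) (r.map φ)

end PTree

/-- `T` is a phylogenetic tree on the taxon set `X`:
its leaves are bijectively labelled by the elements of `X`. -/
def IsPhylo {X : Type} (T : PTree X) : Prop :=
  T.leaves.Nodup ∧ ∀ x : X, x ∈ T.leaves

/-- A state-labelled binary tree (an extension assigns a state to every vertex). -/
inductive ETree (C : Type) : Type
  | leaf : C → ETree C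
  | node : C → ETree C → ETree C → ETree C

namespace ETree

/-- The state at the root. -/
def root {C : Type} : ETree C → C
  | .leaf c => c
  | .node c _ _ => c

/-- The number of edges `{u,v}` with different states at the two endpoints
(substitutions/mutations). -/
def changes {C : Type} [DecidableEq C] : ETree C → ℕ
  | .leaf _ => 0
  | .node c l r =>
      ((if l.root = c then 0 else 1) + (if r.root = c then 0 else 1)) +
        (l.changes + r.changes)

end ETree

/-- `g` is an extension of the character `f` to the tree `T`: it has the same
shape as `T`, assigns a state to every vertex, and agrees with `f` on the taxa. -/
inductive IsExtension {X C : Type} (f : X → C) : PTree X → ETree C → Prop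
  | leaf (x : X) : IsExtension f (.leaf x) (.leaf (f x))
  | node {l r : PTree X} {gl gr : ETree C} (c : C) :
      IsExtension f l gl → IsExtension f r gr →
      IsExtension f (.node l r) (.node c gl gr)

/-- The parsimony score `l_f(T)`: the minimum number of mutation edges
over all extensions of `f` to `T`. -/
noncomputable def pscore {X C : Type} [DecidableEq C] (f : X → C) (T : PTree X) : ℕ :=
  sInf { k : ℕ | ∃ g : ETree C, IsExtension f T g ∧ g.changes = k }

/-- The MP distance `d_MP(T1,T2) = max_f |l_f(T1) − l_f(T2)|`, the maximum taken
over all characters `f` on the taxon set (states drawn from `ℕ`). -/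
noncomputable def dMP {X : Type} (T1 T2 : PTree X) : ℕ :=
  sSup { k : ℕ | ∃ f : X → ℕ, k = ((pscore f T1 : ℤ) - (pscore f T2 : ℤ)).natAbs }

/-- `d^i_MP(T1,T2)`: as `dMP`, but over characters using at most `i` states. -/
noncomputable def dMPk {X : Type} (i : ℕ) (T1 T2 : PTree X) : ℕ :=
  sSup { k : ℕ | ∃ f : X → Fin i, k = ((pscore f T1 : ℤ) - (pscore f T2 : ℤ)).natAbs }

/-- `max_f (l_f(T2) − l_f(T1))` over all characters `f`. -/
noncomputable def maxDiff {X : Type} (T1 T2 : PTree X) : ℤ :=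
  sSup { d : ℤ | ∃ f : X → ℕ, d = (pscore f T2 : ℤ) - (pscore f T1 : ℤ) }

/-- `max_f (l_f(T2) − l_f(T1))` over all characters `f` with at most `i` states. -/
noncomputable def maxDiffk {X : Type} (i : ℕ) (T1 T2 : PTree X) : ℤ :=
  sSup { d : ℤ | ∃ f : X → Fin i, d = (pscore f T2 : ℤ) - (pscore f T1 : ℤ) }

/-- `gap(T1,T2) = |max_f(l_f(T2)−l_f(T1)) − max_f(l_f(T1)−l_f(T2))|`. -/
noncomputable def gap {X : Type} (T1 T2 : PTree X) : ℤ :=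
  |maxDiff T1 T2 - maxDiff T2 T1|

/-- `gap` restricted to characters with at most `i` states. -/
noncomputable def gapk {X : Type} (i : ℕ) (T1 T2 : PTree X) : ℤ :=
  |maxDiffk i T1 T2 - maxDiffk i T2 T1|

/-- `s` occurs as a (rooted) subtree of `t`. -/
inductive IsSubtree {X : Type} : PTree X → PTree X → Prop
  | refl (t : PTree X) : IsSubtree t t
  | left {s l r : PTree X} : IsSubtree s l → IsSubtree s (.node l r)
  | right {s l r : PTree X} : IsSubtree s r → IsSubtree s (.node l r)

/-- Taxa `a`, `b` form a cherry of `T`: they are leaves with a common parent. -/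
def IsCherry {X : Type} (T : PTree X) (a b : X) : Prop :=
  IsSubtree (.node (.leaf a) (.leaf b)) T

/-- Relabel a tree on taxa `ℕ` by shifting all labels up by `s` (fresh copies). -/
def shiftT (s : ℕ) (T : PTree ℕ) : PTree ℕ := T.map (fun x => x + s)

/-- `T_a = (((((2,3),4),5),6),1)` on taxa `{1,…,6}` (taxon `j` encoded as `j-1`). -/
def Ta6 : PTree ℕ :=
  .node (.node (.node (.node (.node (.leaf 1) (.leaf 2)) (.leaf 3)) (.leaf 4)) (.leaf 5)) (.leaf 0)

/-- `T_b = ((((2,6),(3,4)),5),1)` on taxa `{1,…,6}` (taxon `j` encoded as `j-1`). -/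
def Tb6 : PTree ℕ :=
  .node (.node (.node (.node (.leaf 1) (.leaf 5)) (.node (.leaf 2) (.leaf 3))) (.leaf 4)) (.leaf 0)

/-- `T_A`: two disjoint copies of `T_a` joined under a new root (12 taxa). -/
def TA12 : PTree ℕ := .node Ta6 (shiftT 6 Ta6)

/-- `T_B`: two disjoint copies of `T_b` joined under a new root (12 taxa). -/
def TB12 : PTree ℕ := .node Tb6 (shiftT 6 Tb6)

/-- `TkA k` is the tree `T^{k+1}_A`: `k+1` disjoint copies of `T_A` arranged
along a caterpillar backbone (so `TkA 0 = T^1_A = T_A`). -/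
def TkA : ℕ → PTree ℕ
  | 0 => TA12
  | k+1 => .node (TkA k) (shiftT (12*(k+1)) TA12)

/-- `TkB k` is the tree `T^{k+1}_B`. -/
def TkB : ℕ → PTree ℕ
  | 0 => TB12
  | k+1 => .node (TkB k) (shiftT (12*(k+1)) TB12)

/-- `T_a = (((5,(6,4)),3),((1,(8,2)),7))` on taxa `{1,…,8}` (taxon `j` encoded as `j-1`). -/
def Ta8 : PTree ℕ :=
  .node (.node (.node (.leaf 4) (.node (.leaf 5) (.leaf 3))) (.leaf 2))
        (.node (.node (.leaf 0) (.node (.leaf 7) (.leaf 1))) (.leaf 6))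

/-- `T_b = (((7,((4,2),6)),3),(8,(1,5)))` on taxa `{1,…,8}` (taxon `j` encoded as `j-1`). -/
def Tb8 : PTree ℕ :=
  .node (.node (.node (.leaf 6) (.node (.node (.leaf 3) (.leaf 1)) (.leaf 5))) (.leaf 2))
        (.node (.leaf 7) (.node (.leaf 0) (.leaf 4)))

/-- `T_A` (2-state construction): two disjoint copies of `T_a` under a new root (16 taxa). -/
def TA16 : PTree ℕ := .node Ta8 (shiftT 8 Ta8)

/-- `T_B` (2-state construction): two disjoint copies of `T_b` under a new root (16 taxa). -/
def TB16 : PTree ℕ := .node Tb8 (shiftT 8 Tb8)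

/-- `T_AA`: two disjoint copies of `T_A` under a new root (32 taxa). -/
def TAA : PTree ℕ := .node TA16 (shiftT 16 TA16)

/-- `T_BB`: two disjoint copies of `T_B` under a new root (32 taxa). -/
def TBB : PTree ℕ := .node TB16 (shiftT 16 TB16)

/-- `TkAA k` is the tree `T^{k+1}_AA` (so `TkAA 0 = T^1_AA = T_AA`). -/
def TkAA : ℕ → PTree ℕ
  | 0 => TAA
  | k+1 => .node (TkAA k) (shiftT (32*(k+1)) TAA)

/-- `TkBB k` is the tree `T^{k+1}_BB`. -/
def TkBB : ℕ → PTree ℕ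
  | 0 => TBB
  | k+1 => .node (TkBB k) (shiftT (32*(k+1)) TBB)


section FitchAux

variable {X C D : Type} [DecidableEq C] [DecidableEq D]

/-- Fitch's algorithm: returns the set of optimal root states and the parsimony score. -/
def fitch (f : X → C) : PTree X → Finset C × ℕ
  | .leaf x => ({f x}, 0)
  | .node l r =>
      if ((fitch f l).1 ∩ (fitch f r).1).Nonempty
      then ((fitch f l).1 ∩ (fitch f r).1, (fitch f l).2 + (fitch f r).2)
      else ((fitch f l).1 ∪ (fitch f r).1, (fitch f l).2 + (fitch f r).2 + 1)

lemma fitch_nonempty (f : X → C) : ∀ T : PTree X, (fitch f T).1.Nonempty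
  | .leaf x => by simp [fitch]
  | .node l r => by
      rw [fitch]
      split
      · next h => simpa using h
      · obtain ⟨c, hc⟩ := fitch_nonempty f l
        exact ⟨c, Finset.mem_union_left _ hc⟩

private lemma side_bound {S : Finset C} {cost : ℕ} {g : ETree C} {c : C}
    (h1 : cost ≤ g.changes) (h2 : g.root ∉ S → cost + 1 ≤ g.changes) (hc : c ∉ S) :
    cost + 1 ≤ (if g.root = c then 0 else 1) + g.changes := by
  by_cases he : g.root = c
  · simp only [he, if_pos rfl]
    simpa using h2 (he ▸ hc)
  · simp only [if_neg he]
    omega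

lemma fitch_lower (f : X → C) {T : PTree X} {g : ETree C} (h : IsExtension f T g) :
    (fitch f T).2 ≤ g.changes ∧ (g.root ∉ (fitch f T).1 → (fitch f T).2 + 1 ≤ g.changes) := by
  induction h with
  | leaf x => simp [fitch, ETree.changes, ETree.root]
  | @node l r gl gr c hl hr ihl ihr =>
      rw [fitch]
      have hch : (ETree.node c gl gr).changes =
          ((if gl.root = c then 0 else 1) + (if gr.root = c then 0 else 1)) +
            (gl.changes + gr.changes) := rfl
      have hrt : (ETree.node c gl gr).root = c := rfl
      have e1 : (0:ℕ) ≤ (if gl.root = c then 0 else 1) := by positivity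
      have e2 : (0:ℕ) ≤ (if gr.root = c then 0 else 1) := by positivity
      split
      · next hne =>
        constructor
        · simp only [hch]; have := ihl.1; have := ihr.1; omega
        · intro hc
          rw [hrt, Finset.mem_inter, not_and_or] at hc
          rcases hc with hc | hc
          · have := side_bound ihl.1 ihl.2 hc
            have := ihr.1
            simp only [hch]; omega
          · have := side_bound ihr.1 ihr.2 hc
            have := ihl.1
            simp only [hch]; omega
      · next hne =>
        have hdisj : ¬ (c ∈ (fitch f l).1 ∧ c ∈ (fitch f r).1) := by
          intro ⟨h1, h2⟩
          exact hne ⟨c, Finset.mem_inter.2 ⟨h1, h2⟩⟩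
        constructor
        · rcases (not_and_or.1 hdisj) with hc | hc
          · have := side_bound ihl.1 ihl.2 hc
            have := ihr.1
            simp only [hch]; omega
          · have := side_bound ihr.1 ihr.2 hc
            have := ihl.1
            simp only [hch]; omega
        · intro hc
          rw [hrt, Finset.mem_union, not_or] at hc
          have hL := side_bound ihl.1 ihl.2 hc.1
          have hR := side_bound ihr.1 ihr.2 hc.2
          simp only [hch]; omega

lemma fitch_upper (f : X → C) :
    ∀ T : PTree X, ∀ c ∈ (fitch f T).1,
      ∃ g : ETree C, IsExtension f T g ∧ g.root = c ∧ g.changes = (fitch f T).2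
  | .leaf x => by
      intro c hc
      simp only [fitch, Finset.mem_singleton] at hc
      refine ⟨.leaf (f x), IsExtension.leaf x, ?_, rfl⟩
      simp [ETree.root, hc]
  | .node l r => by
      intro c hc
      rw [fitch] at hc ⊢
      split at hc
      · next hne =>
        rw [Finset.mem_inter] at hc
        obtain ⟨gl, hgl, hrl, hcl⟩ := fitch_upper f l c hc.1
        obtain ⟨gr, hgr, hrr, hcr⟩ := fitch_upper f r c hc.2
        refine ⟨.node c gl gr, IsExtension.node c hgl hgr, rfl, ?_⟩
        simp [ETree.changes, hrl, hrr, hcl, hcr, if_pos hne]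
      · next hne =>
        have hdisj : ∀ d, ¬ (d ∈ (fitch f l).1 ∧ d ∈ (fitch f r).1) := by
          intro d ⟨h1, h2⟩
          exact hne ⟨d, Finset.mem_inter.2 ⟨h1, h2⟩⟩
        rw [Finset.mem_union] at hc
        rcases hc with hc | hc
        · obtain ⟨c', hc'⟩ := fitch_nonempty f r
          obtain ⟨gl, hgl, hrl, hcl⟩ := fitch_upper f l c hc
          obtain ⟨gr, hgr, hrr, hcr⟩ := fitch_upper f r c' hc'
          have hne' : c' ≠ c := fun h => hdisj c ⟨hc, h ▸ hc'⟩
          refine ⟨.node c gl gr, IsExtension.node c hgl hgr, rfl, ?_⟩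
          simp [ETree.changes, hrl, hrr, hcl, hcr, hne', if_neg hne]
          omega
        · obtain ⟨c', hc'⟩ := fitch_nonempty f l
          obtain ⟨gl, hgl, hrl, hcl⟩ := fitch_upper f l c' hc'
          obtain ⟨gr, hgr, hrr, hcr⟩ := fitch_upper f r c hc
          have hne' : c' ≠ c := fun h => hdisj c ⟨h ▸ hc', hc⟩
          refine ⟨.node c gl gr, IsExtension.node c hgl hgr, rfl, ?_⟩
          simp [ETree.changes, hrl, hrr, hcl, hcr, hne', if_neg hne]
          omega

lemma pscore_eq_fitch (f : X → C) (T : PTree X) : pscore f T = (fitch f T).2 := by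
  obtain ⟨c, hc⟩ := fitch_nonempty f T
  obtain ⟨g, hg, _, hch⟩ := fitch_upper f T c hc
  apply le_antisymm
  · exact Nat.sInf_le ⟨g, hg, hch⟩
  · refine le_csInf ⟨_, g, hg, hch⟩ ?_
    rintro k ⟨g', hg', rfl⟩
    exact (fitch_lower f hg').1

lemma fitch_congr {f g : X → C} : ∀ T : PTree X,
    (∀ x ∈ T.leaves, f x = g x) → fitch f T = fitch g T
  | .leaf x => by
      intro h
      simp [fitch, h x (by simp [PTree.leaves])]
  | .node l r => by
      intro h
      have hl := fitch_congr (f := f) (g := g) l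
        (fun x hx => h x (by simp [PTree.leaves, hx]))
      have hr := fitch_congr (f := f) (g := g) r
        (fun x hx => h x (by simp [PTree.leaves, hx]))
      rw [fitch, fitch, hl, hr]

lemma fitch_subset (f : X → C) : ∀ T : PTree X,
    (fitch f T).1 ⊆ (T.leaves.map f).toFinset
  | .leaf x => by simp [fitch, PTree.leaves]
  | .node l r => by
      have hl := fitch_subset f l
      have hr := fitch_subset f r
      have hsub : (fitch f l).1 ∪ (fitch f r).1 ⊆ ((PTree.node l r).leaves.map f).toFinset := by
        simp only [PTree.leaves, List.map_append, List.toFinset_append]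
        exact Finset.union_subset (hl.trans Finset.subset_union_left)
          (hr.trans Finset.subset_union_right)
      rw [fitch]
      split
      · exact (Finset.inter_subset_left.trans Finset.subset_union_left).trans hsub
      · exact hsub

lemma fitch_comp (f : X → C) (σ : C → D) : ∀ T : PTree X,
    Set.InjOn σ ((T.leaves.map f).toFinset : Set C) →
    fitch (fun x => σ (f x)) T = ((fitch f T).1.image σ, (fitch f T).2)
  | .leaf x => by intro _; simp [fitch]
  | .node l r => by
      intro h
      have hsubl : ((l.leaves.map f).toFinset : Set C) ⊆
          (((PTree.node l r).leaves.map f).toFinset : Set C) := by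
        intro c hc
        simp only [PTree.leaves, List.map_append, List.toFinset_append, Finset.coe_union]
        exact Or.inl hc
      have hsubr : ((r.leaves.map f).toFinset : Set C) ⊆
          (((PTree.node l r).leaves.map f).toFinset : Set C) := by
        intro c hc
        simp only [PTree.leaves, List.map_append, List.toFinset_append, Finset.coe_union]
        exact Or.inr hc
      have ihl := fitch_comp f σ l (h.mono hsubl)
      have ihr := fitch_comp f σ r (h.mono hsubr)
      have hinj : Set.InjOn σ (((fitch f l).1 ∪ (fitch f r).1 : Finset C) : Set C) := by
        refine h.mono ?_
        intro c hc
        simp only [Finset.coe_union, Set.mem_union, Finset.mem_coe] at hc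
        rcases hc with hc | hc
        · exact hsubl (fitch_subset f l hc)
        · exact hsubr (fitch_subset f r hc)
      have hint : ((fitch f l).1 ∩ (fitch f r).1).image σ =
          (fitch f l).1.image σ ∩ (fitch f r).1.image σ := by
        refine Finset.image_inter_of_injOn _ _ ?_
        simpa using hinj
      rw [fitch, fitch, ihl, ihr]
      simp only [← hint, Finset.image_nonempty]
      split
      · rfl
      · simp [Finset.image_union]

lemma fitch_cost_lt (f : X → C) : ∀ T : PTree X, (fitch f T).2 + 1 ≤ T.leaves.length
  | .leaf x => by simp [fitch, PTree.leaves]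
  | .node l r => by
      have hl := fitch_cost_lt f l
      have hr := fitch_cost_lt f r
      have hlen : (PTree.node l r).leaves.length = l.leaves.length + r.leaves.length := by
        simp [PTree.leaves]
      rw [fitch]
      split <;> simp only [hlen] <;> omega

end FitchAux

/-- The 2-state exhaustive check. -/
def charOf (b : Fin 6 → Fin 2) : ℕ → ℕ := fun x => if h : x < 6 then (b ⟨x, h⟩ : ℕ) else 0

set_option maxRecDepth 100000 in
lemma two_state_check : ∀ b : Fin 6 → Fin 2,
    (fitch (charOf b) Ta6).2 ≤ (fitch (charOf b) Tb6).2 + 1 ∧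
    (fitch (charOf b) Tb6).2 ≤ (fitch (charOf b) Ta6).2 + 1 := by decide

/-- witness character with score difference 2 -/
def f0 : ℕ → ℕ := fun x => [0,1,1,2,2,0].getD x 0

lemma f0_Ta : (fitch f0 Ta6).2 = 2 := by decide

lemma f0_Tb : (fitch f0 Tb6).2 = 4 := by decide

lemma pscore_le_five (f : ℕ → ℕ) : pscore f Ta6 ≤ 5 ∧ pscore f Tb6 ≤ 5 := by
  have h1 := fitch_cost_lt f Ta6
  have h2 := fitch_cost_lt f Tb6
  have e1 : Ta6.leaves.length = 6 := by decide
  have e2 : Tb6.leaves.length = 6 := by decide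
  rw [pscore_eq_fitch, pscore_eq_fitch]
  omega

lemma dMP_ge_two : 2 ≤ dMP Ta6 Tb6 := by
  apply le_csSup
  · refine ⟨5, ?_⟩
    rintro k ⟨f, rfl⟩
    have := pscore_le_five f
    omega
  · refine ⟨f0, ?_⟩
    rw [pscore_eq_fitch, pscore_eq_fitch, f0_Ta, f0_Tb]
    decide

/-- every character attaining `d_MP(T_a,T_b)` for the 6-taxon
trees `T_a`, `T_b` uses at least 3 states (so the `⌊n/2⌋` bound is tight for
`n = 6`). -/
theorem optimal_needs_three_states (f : ℕ → ℕ)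
    (hopt : ((pscore f Ta6 : ℤ) - (pscore f Tb6 : ℤ)).natAbs = dMP Ta6 Tb6) :
    3 ≤ (Ta6.leaves.map f).toFinset.card := by
  by_contra hcard
  push_neg at hcard
  set s := (Ta6.leaves.map f).toFinset with hs
  have hmem : ∀ x : ℕ, x < 6 → f x ∈ s := by
    intro x hx
    simp only [hs, List.mem_toFinset, List.mem_map]
    exact ⟨x, by interval_cases x <;> decide, rfl⟩
  set a := f 1 with ha'
  have ha : a ∈ s := hmem 1 (by omega)
  have hcover : ∃ b : ℕ, ∀ c ∈ s, c = a ∨ c = b := by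
    by_cases h : (s.erase a).Nonempty
    · obtain ⟨b, hbm⟩ := h
      refine ⟨b, fun c hc => ?_⟩
      by_cases hca : c = a
      · exact Or.inl hca
      · right
        have hc' : c ∈ s.erase a := Finset.mem_erase.2 ⟨hca, hc⟩
        have hce := Finset.card_erase_of_mem ha
        have hcard' : (s.erase a).card ≤ 1 := by omega
        exact Finset.card_le_one.1 hcard' _ hc' _ hbm
    · refine ⟨a, fun c hc => Or.inl ?_⟩
      by_contra hca
      exact h ⟨c, Finset.mem_erase.2 ⟨hca, hc⟩⟩
  obtain ⟨b, hb⟩ := hcover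
  set σ : ℕ → ℕ := fun c => if c = a then 0 else 1 with hσ
  set bv : Fin 6 → Fin 2 := fun i => if f i.val = a then 0 else 1 with hbv
  have hinj : ∀ t : Set ℕ, (∀ c ∈ t, c = a ∨ c = b) → Set.InjOn σ t := by
    intro t ht x hx y hy hxy
    by_cases hxa : x = a <;> by_cases hya : y = a
    · rw [hxa, hya]
    · simp [hσ, hxa, hya] at hxy
    · simp [hσ, hxa, hya] at hxy
    · rcases ht x hx with h | h
      · exact absurd h hxa
      rcases ht y hy with h' | h'
      · exact absurd h' hya
      rw [h, h']
  have hta6 : ∀ x : ℕ, x ∈ Ta6.leaves → x < 6 := by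
    intro x hx
    have hl : Ta6.leaves = [1,2,3,4,5,0] := rfl
    rw [hl] at hx; simp at hx; omega
  have htb6 : ∀ x : ℕ, x ∈ Tb6.leaves → x < 6 := by
    intro x hx
    have hl : Tb6.leaves = [1,5,2,3,4,0] := rfl
    rw [hl] at hx; simp at hx; omega
  have hta : ∀ c ∈ ((Ta6.leaves.map f).toFinset : Set ℕ), c = a ∨ c = b := by
    intro c hc
    exact hb c (by simpa [hs] using hc)
  have htb : ∀ c ∈ ((Tb6.leaves.map f).toFinset : Set ℕ), c = a ∨ c = b := by
    intro c hc
    simp only [Finset.mem_coe, List.mem_toFinset, List.mem_map] at hc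
    obtain ⟨x, hx, rfl⟩ := hc
    exact hb _ (hmem x (htb6 x hx))
  have hagree : ∀ x : ℕ, x < 6 → σ (f x) = charOf bv x := by
    intro x hx
    simp only [charOf, dif_pos hx, hbv, hσ]
    by_cases h : f x = a <;> simp [h]
  have hA : pscore f Ta6 = pscore (charOf bv) Ta6 := by
    rw [pscore_eq_fitch, pscore_eq_fitch]
    have h1 := fitch_comp f σ Ta6 (hinj _ hta)
    have h2 : fitch (fun x => σ (f x)) Ta6 = fitch (charOf bv) Ta6 :=
      fitch_congr Ta6 (fun x hx => hagree x (hta6 x hx))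
    rw [← h2, h1]
  have hB : pscore f Tb6 = pscore (charOf bv) Tb6 := by
    rw [pscore_eq_fitch, pscore_eq_fitch]
    have h1 := fitch_comp f σ Tb6 (hinj _ htb)
    have h2 : fitch (fun x => σ (f x)) Tb6 = fitch (charOf bv) Tb6 :=
      fitch_congr Tb6 (fun x hx => hagree x (htb6 x hx))
    rw [← h2, h1]
  have hchk := two_state_check bv
  have hge := dMP_ge_two
  rw [hA, hB, pscore_eq_fitch, pscore_eq_fitch] at hopt
  omega

end MPDist
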